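/- For x > 0, the loan market S_x is arbitrage-free: if γ = α − β with α, β ∈ S_x and γ(0) = 0, then either γ = 0 or there exists k ≥ 1 with γ(k) < 0. In particular the linear span of S_x contains no arbitrage. -/

import Mathlib

/-- The elementary loan `-1 + (1+mx)·yᵐ` of maturity `m`, simple interest rate `x`. -/
noncomputable def elemLoan (x : ℝ) (m : ℕ) : Polynomial ℝ :=
  Polynomial.C (1 + m * x) * Polynomial.X ^ m - 1

/-- The convex cone generated by the elementary loans of simple interest rate `x`:
the set of conical combinations of the `elemLoan x m`, `m ≥ 1`. -/
noncomputable def Sx (x : ℝ) : Set (Polynomial ℝ) :=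
  {α | ∃ (n : ℕ) (c : Fin n → ℝ) (m : Fin n → ℕ), 0 < n ∧ (∀ k, 0 < c k) ∧ (∀ k, 1 ≤ m k) ∧
    α = ∑ k, c k • elemLoan x (m k)}

/-- An arbitrage: a nonzero transaction with zero payment at time 0 and positive net gain. -/
def IsArbitrage (β : Polynomial ℝ) : Prop :=
  β ≠ 0 ∧ β.coeff 0 = 0 ∧ (∀ k ≥ 1, 0 ≤ β.coeff k) ∧
    0 < ∑ k ∈ Finset.Icc 1 β.natDegree, β.coeff k

/-- The pricing functional `p ↦ Σ_k p_k / (1 + k x)`. -/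
noncomputable def Lfun (x : ℝ) : Polynomial ℝ →ₗ[ℝ] ℝ where
  toFun p := p.sum fun k a => a * (1 + (k : ℝ) * x)⁻¹
  map_add' p q := Polynomial.sum_add_index p q _ (fun k => by simp) (fun k a b => by ring)
  map_smul' c p := by
    simp only [RingHom.id_apply, smul_eq_mul]
    rw [Polynomial.sum_smul_index p c (fun k a => a * (1 + (k:ℝ) * x)⁻¹)
      (fun k => zero_mul _), Polynomial.sum_def, Polynomial.sum_def, Finset.mul_sum]
    exact Finset.sum_congr rfl fun k _ => by ring

lemma Lfun_elemLoan (x : ℝ) (hx : 0 < x) (m : ℕ) : Lfun x (elemLoan x m) = 0 := by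
  have h1 : (0:ℝ) < 1 + (m : ℝ) * x := by positivity
  have : elemLoan x m = Polynomial.monomial m (1 + (m:ℝ) * x) - Polynomial.monomial 0 1 := by
    rw [elemLoan, Polynomial.C_mul_X_pow_eq_monomial]
    rw [Polynomial.monomial_zero_one]
  rw [this, map_sub]
  simp only [Lfun, LinearMap.coe_mk, AddHom.coe_mk]
  rw [Polynomial.sum_monomial_index _ _ (by simp), Polynomial.sum_monomial_index _ _ (by simp)]
  simp only [Nat.cast_zero, zero_mul, add_zero, inv_one, mul_one]
  rw [mul_inv_cancel₀ (ne_of_gt h1), sub_self]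

lemma Lfun_span_zero (x : ℝ) (hx : 0 < x) (γ : Polynomial ℝ)
    (hγ : γ ∈ Submodule.span ℝ (Sx x)) : Lfun x γ = 0 := by
  induction hγ using Submodule.span_induction with
  | mem p hp =>
    obtain ⟨n, c, m, _, _, _, rfl⟩ := hp
    rw [map_sum]
    apply Finset.sum_eq_zero
    intro k _
    rw [map_smul, Lfun_elemLoan x hx, smul_zero]
  | zero => simp
  | add p q _ _ hp hq => rw [map_add, hp, hq, add_zero]
  | smul c p _ hp => rw [map_smul, hp, smul_zero]

/-- Key lemma: a member of the span of `Sx` with zero payment at time 0 and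
nonnegative later coefficients is zero. -/
lemma span_nonneg_eq_zero (x : ℝ) (hx : 0 < x) (γ : Polynomial ℝ)
    (hγ : γ ∈ Submodule.span ℝ (Sx x)) (h0 : γ.coeff 0 = 0)
    (hpos : ∀ k ≥ 1, 0 ≤ γ.coeff k) : γ = 0 := by
  by_contra hne
  have hL : Lfun x γ = 0 := Lfun_span_zero x hx γ hγ
  have hsum : Lfun x γ = ∑ k ∈ γ.support, γ.coeff k * (1 + (k : ℝ) * x)⁻¹ := rfl
  have hposum : 0 < ∑ k ∈ γ.support, γ.coeff k * (1 + (k : ℝ) * x)⁻¹ := by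
    apply Finset.sum_pos
    · intro k hk
      have hk0 : γ.coeff k ≠ 0 := Polynomial.mem_support_iff.mp hk
      have hk1 : 1 ≤ k := by
        rcases Nat.eq_zero_or_pos k with h | h
        · exact absurd (h ▸ h0) hk0
        · exact h
      have : 0 < γ.coeff k := lt_of_le_of_ne (hpos k hk1) (Ne.symm hk0)
      have hd : (0:ℝ) < 1 + (k : ℝ) * x := by positivity
      positivity
    · exact Finset.nonempty_of_ne_empty (fun h => hne (Polynomial.support_eq_empty.mp h))
  rw [hsum] at hL
  exact absurd hL (ne_of_gt hposum)

theorem sx_arbitrage_free (x : ℝ) (hx : 0 < x) :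
    (∀ α ∈ Sx x, ∀ β ∈ Sx x, (α - β).coeff 0 = 0 →
      (α - β = 0 ∨ ∃ k ≥ 1, (α - β).coeff k < 0)) ∧
    (∀ γ ∈ Submodule.span ℝ (Sx x), ¬ IsArbitrage γ) := by
  constructor
  · intro α hα β hβ h0
    by_cases h : ∃ k ≥ 1, (α - β).coeff k < 0
    · exact Or.inr h
    · push_neg at h
      left
      exact span_nonneg_eq_zero x hx _
        (sub_mem (Submodule.subset_span hα) (Submodule.subset_span hβ)) h0 h
  · rintro γ hγ ⟨hne, h0, hpos, -⟩
    exact hne (span_nonneg_eq_zero x hx γ hγ h0 hpos)
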